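/- Let n ≥ 7 and let t be an integer with 2 ≤ t ≤ ⌊(n−1)/2⌋ − 1, and set M := n − t − 2. Let p be a prime not dividing t, let F = GF(p) and V = F^M with standard basis e_1,…,e_M and c := e_1 + ⋯ + e_M. Define the subspaces A_i := span{e_i} for 1 ≤ i ≤ M, B_i := span{c − e_i} for 1 ≤ i ≤ t+1, and C := span{c}. Then inequality (a) fails for these subspaces; in fact its left-hand side exceeds its right-hand side by exactly 1. -/

import Mathlib

open Finset

variable {F V : Type*} [Field F] [AddCommGroup V] [Module F V]

/-- `eH X` is the dimension of the subspace `X`, as an integer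
(the "entropy" `H(X)` of the paper). -/
noncomputable def eH (X : Submodule F V) : ℤ := Module.finrank F X

/-- Left-hand side of inequality (a):
`H(B_1,…,B_{t+1},A_{t+2},…,A_M) + (t+2)(M−t−1)·H(C)`. -/
noncomputable def lhsA (t M : ℕ) (A B : ℕ → Submodule F V) (C : Submodule F V) : ℤ :=
  eH ((∑ i ∈ Icc 1 (t+1), B i) + ∑ i ∈ Icc (t+2) M, A i)
    + ((t : ℤ) + 2) * ((M : ℤ) - t - 1) * eH C

/-- Right-hand side of inequality (a):
`(M−1)·I(A_1+⋯+A_M ; C) + (t+2)·Σ_{i=t+2}^{M} H(A_i)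
 + ((t+2)(M−t)−1)·( H(C | A_1,…,A_M) + Σ_{i=1}^{M} I(Σ_{j≠i} A_j ; C) )
 + Σ_{i=1}^{t+1} ( H(B_i | A_j : j≠i) + H(B_i | A_i, C)
      + I(A_1+⋯+A_i ; A_{i+1}+⋯+A_{t+1}) + I(A_1+⋯+A_{i−1} ; A_i) )`. -/
noncomputable def rhsA (t M : ℕ) (A B : ℕ → Submodule F V) (C : Submodule F V) : ℤ :=
  ((M : ℤ) - 1) * eH ((∑ i ∈ Icc 1 M, A i) ⊓ C)
  + ((t : ℤ) + 2) * ∑ i ∈ Icc (t+2) M, eH (A i)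
  + (((t : ℤ) + 2) * ((M : ℤ) - t) - 1) *
      ((eH (C + ∑ i ∈ Icc 1 M, A i) - eH (∑ i ∈ Icc 1 M, A i))
        + ∑ i ∈ Icc 1 M, eH ((∑ j ∈ (Icc 1 M).erase i, A j) ⊓ C))
  + ∑ i ∈ Icc 1 (t+1),
      ((eH (B i + ∑ j ∈ (Icc 1 M).erase i, A j) - eH (∑ j ∈ (Icc 1 M).erase i, A j))
        + (eH (B i + (A i + C)) - eH (A i + C))
        + eH ((∑ j ∈ Icc 1 i, A j) ⊓ (∑ j ∈ Icc (i+1) (t+1), A j))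
        + eH ((∑ j ∈ Icc 1 (i-1), A j) ⊓ A i))

/-- Inequality (a) of the paper. -/
def IneqA (t M : ℕ) (A B : ℕ → Submodule F V) (C : Submodule F V) : Prop :=
  lhsA t M A B C ≤ rhsA t M A B C

/-- Counterexample to inequality (a) in characteristic `p ∤ t`: for the
subspaces `A_i = ⟨e_i⟩`, `B_i = ⟨c − e_i⟩`, `C = ⟨c⟩` of `GF(p)^M`, the
left-hand side of (a) exceeds the right-hand side by exactly `1`. -/
lemma sum_le_of_forall_le' {R W : Type*} [Semiring R] [AddCommMonoid W] [Module R W]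
    {ι : Type*} [DecidableEq ι] (s : Finset ι) (f : ι → Submodule R W) (K : Submodule R W)
    (h : ∀ j ∈ s, f j ≤ K) : ∑ j ∈ s, f j ≤ K := by
  induction s using Finset.induction_on with
  | empty => simp
  | insert _ _ hj ih =>
      rw [Finset.sum_insert hj, Submodule.add_eq_sup]
      exact sup_le (h _ (Finset.mem_insert_self _ _))
        (ih fun j hjs => h j (Finset.mem_insert_of_mem hjs))

lemma le_sum_of_mem' {R W : Type*} [Semiring R] [AddCommMonoid W] [Module R W]
    {ι : Type*} {s : Finset ι} (f : ι → Submodule R W) {j : ι} (hj : j ∈ s) :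
    f j ≤ ∑ i ∈ s, f i :=
  Finset.single_le_sum (fun i _ => by simpa using (bot_le : ⊥ ≤ f i)) hj

theorem ineqA_fails_of_char_not_dvd (n t M : ℕ) (hn : 7 ≤ n) (ht2 : 2 ≤ t)
    (ht : t ≤ (n - 1) / 2 - 1) (hM : M = n - t - 2)
    (p : ℕ) [Fact p.Prime] (hpt : ¬ p ∣ t)
    (e : ℕ → (Fin M → ZMod p)) (he : ∀ i j, e i j = if (j : ℕ) + 1 = i then 1 else 0)
    (c : Fin M → ZMod p) (hc : c = fun _ => 1)
    (A B : ℕ → Submodule (ZMod p) (Fin M → ZMod p)) (C : Submodule (ZMod p) (Fin M → ZMod p))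
    (hA : ∀ i, A i = Submodule.span (ZMod p) {e i})
    (hB : ∀ i, B i = Submodule.span (ZMod p) {c - e i})
    (hC : C = Submodule.span (ZMod p) {c}) :
    lhsA t M A B C = rhsA t M A B C + 1 := by
  -- arithmetic facts
  have h2 : (t + 1) * 2 ≤ n - 1 := by
    have h1 : t + 1 ≤ (n - 1) / 2 := by omega
    exact (Nat.le_div_iff_mul_le (by norm_num)).mp h1
  have hMt : t + 1 ≤ M := by omega
  have hM0 : 0 < M := by omega
  -- basic vector facts
  have hone : (1 : ZMod p) ≠ 0 := one_ne_zero
  have hc0 : c ≠ 0 := by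
    intro h
    have := congrFun h ⟨0, hM0⟩
    rw [hc] at this
    exact hone this
  have hesingle : ∀ k : Fin M, e ((k : ℕ) + 1) = Pi.single k 1 := by
    intro k; funext j
    rw [he, Pi.single_apply]
    by_cases h : j = k
    · subst h; simp
    · rw [if_neg (fun hh => h (Fin.ext (by omega))), if_neg h]
  -- decomposition of arbitrary vectors
  have hv : ∀ v : Fin M → ZMod p, v = ∑ k : Fin M, v k • e ((k : ℕ) + 1) := by
    intro v
    conv_lhs => rw [← Finset.univ_sum_single v]
    refine Finset.sum_congr rfl fun k _ => ?_
    rw [hesingle]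
    funext j
    rw [Pi.smul_apply, Pi.single_apply, Pi.single_apply]
    by_cases h : j = k <;> simp [h]
  -- e j is in A j hence in sums containing A j
  have heA : ∀ j, e j ∈ A j := by
    intro j; rw [hA]; exact Submodule.mem_span_singleton_self _
  -- sums of A's inside kernels of coordinate projections
  have hAleK : ∀ (s : Finset ℕ) (k : Fin M), (k : ℕ) + 1 ∉ s →
      ∑ j ∈ s, A j ≤ LinearMap.ker (LinearMap.proj (R := ZMod p)
        (φ := fun _ : Fin M => ZMod p) k) := by
    intro s k hk
    apply sum_le_of_forall_le'
    intro j hj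
    rw [hA, Submodule.span_le, Set.singleton_subset_iff]
    simp only [SetLike.mem_coe, LinearMap.mem_ker, LinearMap.proj_apply]
    rw [he, if_neg]
    intro hcon
    exact hk (hcon ▸ hj)
  have hmemK : ∀ (s : Finset ℕ) (k : Fin M) (x : Fin M → ZMod p), (k : ℕ) + 1 ∉ s →
      x ∈ ∑ j ∈ s, A j → x k = 0 := by
    intro s k x hk hx
    exact LinearMap.mem_ker.mp (hAleK s k hk hx)
  -- disjoint index sets give trivial intersections
  have hdisjsum : ∀ s u : Finset ℕ, Disjoint s u →
      (∑ j ∈ s, A j) ⊓ (∑ j ∈ u, A j) = ⊥ := by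
    intro s u hd
    rw [eq_bot_iff]
    rintro x hx
    rw [Submodule.mem_inf] at hx
    rw [Submodule.mem_bot]
    funext k
    by_cases hk : (k : ℕ) + 1 ∈ s
    · exact hmemK u k x (Finset.disjoint_left.mp hd hk) hx.2
    · exact hmemK s k x hk hx.1
  -- the full sum is ⊤
  have hS : (∑ i ∈ Icc 1 M, A i) = ⊤ := by
    rw [eq_top_iff]
    intro v _
    rw [hv v]
    refine Submodule.sum_mem _ fun k _ => Submodule.smul_mem _ _ ?_
    exact le_sum_of_mem' A (by simp [Finset.mem_Icc]) (heA _)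
  -- intersection of hyperplane-sums with C is ⊥
  have hHypC : ∀ i ∈ Icc 1 M, (∑ j ∈ (Icc 1 M).erase i, A j) ⊓ C = ⊥ := by
    intro i hi
    rw [Finset.mem_Icc] at hi
    rw [eq_bot_iff]
    rintro x hx
    rw [Submodule.mem_inf] at hx
    obtain ⟨hx1, hx2⟩ := hx
    rw [hC, Submodule.mem_span_singleton] at hx2
    obtain ⟨a, rfl⟩ := hx2
    have hk : (a • c) (⟨i - 1, by omega⟩ : Fin M) = 0 := by
      refine hmemK _ _ _ ?_ hx1
      intro h
      rw [show i - 1 + 1 = i by omega] at h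
      exact (Finset.mem_erase.mp h).1 rfl
    rw [Pi.smul_apply, hc] at hk
    simp only [smul_eq_mul, mul_one] at hk
    rw [Submodule.mem_bot, hk, zero_smul]
  -- B i sits inside the hyperplane-sum
  have hce : ∀ i, c - e i = ∑ j ∈ (Icc 1 M).erase i, e j := by
    intro i
    funext k
    rw [Finset.sum_apply]
    simp only [he]
    rw [Finset.sum_ite_eq, Pi.sub_apply, hc, he]
    have hkmem : (k : ℕ) + 1 ∈ Icc 1 M := by simp [Finset.mem_Icc]
    by_cases hki : (k : ℕ) + 1 = i
    · rw [if_pos hki, if_neg (fun h => (Finset.mem_erase.mp h).1 hki)]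
      ring
    · rw [if_neg hki, if_pos (Finset.mem_erase.mpr ⟨hki, hkmem⟩)]
      ring
  have hBHyp : ∀ i, B i ≤ ∑ j ∈ (Icc 1 M).erase i, A j := by
    intro i
    rw [hB, Submodule.span_le, Set.singleton_subset_iff, SetLike.mem_coe, hce]
    exact Submodule.sum_mem _ fun j hj => le_sum_of_mem' A hj (heA j)
  have hBHyp' : ∀ i, B i + ∑ j ∈ (Icc 1 M).erase i, A j = ∑ j ∈ (Icc 1 M).erase i, A j := by
    intro i
    rw [Submodule.add_eq_sup, sup_eq_right.mpr (hBHyp i)]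
  -- B i ≤ A i + C
  have hBAC : ∀ i, B i + (A i + C) = A i + C := by
    intro i
    rw [Submodule.add_eq_sup, sup_eq_right]
    rw [hB, Submodule.span_le, Set.singleton_subset_iff, SetLike.mem_coe]
    have h1 : c ∈ A i + C := by
      rw [Submodule.add_eq_sup]
      exact Submodule.mem_sup_right (hC ▸ Submodule.mem_span_singleton_self _)
    have h2 : e i ∈ A i + C := by
      rw [Submodule.add_eq_sup]
      exact Submodule.mem_sup_left (heA i)
    exact sub_mem h1 h2
  -- the big sum is ⊤
  have htZ : (t : ZMod p) ≠ 0 := by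
    rwa [Ne, ZMod.natCast_eq_zero_iff]
  have hsum_tc : (t : ZMod p) • c =
      (∑ i ∈ Icc 1 (t+1), (c - e i)) - ∑ i ∈ Icc (t+2) M, e i := by
    funext k
    rw [Pi.smul_apply, Pi.sub_apply, Finset.sum_apply, Finset.sum_apply]
    simp only [Pi.sub_apply, hc, he]
    rw [Finset.sum_sub_distrib, Finset.sum_const, Finset.sum_ite_eq, Finset.sum_ite_eq]
    rw [Nat.card_Icc]
    simp only [smul_eq_mul, mul_one, Finset.mem_Icc]
    have hkM : (k : ℕ) < M := k.isLt
    by_cases hkt : (k : ℕ) + 1 ≤ t + 1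
    · rw [if_pos (by omega), if_neg (by omega)]
      push_cast
      ring
    · rw [if_neg (by omega), if_pos (by omega)]
      push_cast
      ring
  set T0 : Submodule (ZMod p) (Fin M → ZMod p) :=
    (∑ i ∈ Icc 1 (t+1), B i) + ∑ i ∈ Icc (t+2) M, A i with hT0def
  have hBT0 : ∀ i ∈ Icc 1 (t+1), B i ≤ T0 := by
    intro i hi
    rw [hT0def, Submodule.add_eq_sup]
    exact le_trans (le_sum_of_mem' B hi) le_sup_left
  have hAT0 : ∀ i ∈ Icc (t+2) M, A i ≤ T0 := by
    intro i hi
    rw [hT0def, Submodule.add_eq_sup]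
    exact le_trans (le_sum_of_mem' A hi) le_sup_right
  have hcT0 : c ∈ T0 := by
    have hmem : (t : ZMod p) • c ∈ T0 := by
      rw [hsum_tc]
      refine sub_mem (Submodule.sum_mem _ fun i hi => ?_) (Submodule.sum_mem _ fun i hi => ?_)
      · exact hBT0 i hi (hB i ▸ Submodule.mem_span_singleton_self _)
      · exact hAT0 i hi (heA i)
    have := Submodule.smul_mem T0 (t : ZMod p)⁻¹ hmem
    rwa [smul_smul, inv_mul_cancel₀ htZ, one_smul] at this
  have heT0 : ∀ i ∈ Icc 1 M, e i ∈ T0 := by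
    intro i hi
    rw [Finset.mem_Icc] at hi
    by_cases hit : i ≤ t + 1
    · have hci : c - e i ∈ T0 := hBT0 i (by simp [Finset.mem_Icc]; omega)
        (hB i ▸ Submodule.mem_span_singleton_self _)
      have := sub_mem hcT0 hci
      simpa using this
    · exact hAT0 i (by simp [Finset.mem_Icc]; omega) (heA i)
  have hT0 : T0 = ⊤ := by
    rw [eq_top_iff]
    intro v _
    rw [hv v]
    exact Submodule.sum_mem _ fun k _ => Submodule.smul_mem _ _
      (heT0 _ (by simp [Finset.mem_Icc]))
  -- dimension facts
  have heHtop : eH (⊤ : Submodule (ZMod p) (Fin M → ZMod p)) = (M : ℤ) := by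
    rw [eH, finrank_top, Module.finrank_fin_fun]
  have heHC : eH C = 1 := by
    rw [hC, eH, finrank_span_singleton hc0]
    norm_num
  have heHbot : eH (⊥ : Submodule (ZMod p) (Fin M → ZMod p)) = 0 := by
    rw [eH, finrank_bot]
    norm_num
  have heHA : ∀ i ∈ Icc (t+2) M, eH (A i) = 1 := by
    intro i hi
    rw [Finset.mem_Icc] at hi
    rw [hA, eH, finrank_span_singleton]
    · norm_num
    · intro h
      have := congrFun h ⟨i - 1, by omega⟩
      rw [he] at this
      rw [if_pos (by simp; omega)] at this
      exact hone this
  -- rewrite everything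
  unfold lhsA rhsA
  rw [← hT0def, hT0, hS, heHtop, heHC]
  rw [show C + (⊤ : Submodule (ZMod p) (Fin M → ZMod p)) = ⊤ by
    rw [Submodule.add_eq_sup, sup_top_eq]]
  rw [top_inf_eq, heHC, heHtop]
  have hsum1 : ∑ i ∈ Icc (t+2) M, eH (A i) = (M : ℤ) - t - 1 := by
    have h1 : ∑ i ∈ Icc (t+2) M, eH (A i) = ∑ i ∈ Icc (t+2) M, (1 : ℤ) :=
      Finset.sum_congr rfl heHA
    rw [h1, Finset.sum_const, Nat.card_Icc, nsmul_eq_mul, mul_one]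
    omega
  have hsum2 : ∑ i ∈ Icc 1 M, eH ((∑ j ∈ (Icc 1 M).erase i, A j) ⊓ C) = 0 := by
    refine Finset.sum_eq_zero fun i hi => ?_
    rw [hHypC i hi, heHbot]
  have hsum3 : ∑ i ∈ Icc 1 (t+1),
      ((eH (B i + ∑ j ∈ (Icc 1 M).erase i, A j) - eH (∑ j ∈ (Icc 1 M).erase i, A j))
        + (eH (B i + (A i + C)) - eH (A i + C))
        + eH ((∑ j ∈ Icc 1 i, A j) ⊓ (∑ j ∈ Icc (i+1) (t+1), A j))
        + eH ((∑ j ∈ Icc 1 (i-1), A j) ⊓ A i)) = 0 := by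
    refine Finset.sum_eq_zero fun i hi => ?_
    rw [Finset.mem_Icc] at hi
    rw [hBHyp' i, hBAC i]
    rw [hdisjsum _ _ (by
      rw [Finset.disjoint_left]
      intro a ha hb
      rw [Finset.mem_Icc] at ha hb
      omega)]
    have h4 : (∑ j ∈ Icc 1 (i-1), A j) ⊓ A i = ⊥ := by
      have hd := hdisjsum (Icc 1 (i-1)) {i} (by
        rw [Finset.disjoint_left]
        intro a ha hb
        rw [Finset.mem_Icc] at ha
        rw [Finset.mem_singleton] at hb
        omega)
      rwa [Finset.sum_singleton] at hd
    rw [h4, heHbot]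
    ring
  rw [hsum1, hsum2, hsum3]
  ring
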